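/- Let G be a finite p-group acting faithfully on a homogeneous G-lattice M such that H²(C, M|_C) ≠ 0 for every subgroup C of G of order p. Then G is trivial. -/

import Mathlib

open scoped TensorProduct

/-- Extension of scalars of an integral representation. -/
noncomputable def extScalars (A : Type*) [CommRing A] {G M : Type*} [Group G]
    [AddCommGroup M] [Module ℤ M] (ρ : Representation ℤ G M) :
    Representation A G (A ⊗[ℤ] M) :=
  (((Module.End.baseChangeHom ℤ A M : Module.End ℤ M →+* Module.End A (A ⊗[ℤ] M)) :
    Module.End ℤ M →* Module.End A (A ⊗[ℤ] M))).comp ρ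

/-- A `G`-stable submodule of a representation. -/
def StableSub {k G V : Type*} [CommRing k] [Group G] [AddCommGroup V] [Module k V]
    (σ : Representation k G V) (W : Submodule k V) : Prop :=
  ∀ (g : G) (x : V), x ∈ W → σ g x ∈ W

/-- `W` is an irreducible subrepresentation. -/
def IsSimpleSub {k G V : Type*} [CommRing k] [Group G] [AddCommGroup V] [Module k V]
    (σ : Representation k G V) (W : Submodule k V) : Prop :=
  W ≠ ⊥ ∧ StableSub σ W ∧ ∀ W' ≤ W, StableSub σ W' → W' = ⊥ ∨ W' = W

/-- `M` is a homogeneous `G`-lattice. -/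
def Homogeneous {G M : Type*} [Group G] [AddCommGroup M] [Module ℤ M]
    (ρ : Representation ℤ G M) : Prop :=
  ∀ (W₁ W₂ : Submodule ℚ (ℚ ⊗[ℤ] M))
    (h₁ : IsSimpleSub (extScalars ℚ ρ) W₁) (_h₂ : IsSimpleSub (extScalars ℚ ρ) W₂),
    ∃ e : W₁ ≃ₗ[ℚ] W₂, ∀ (g : G) (x : ℚ ⊗[ℤ] M) (hx : x ∈ W₁),
      (e ⟨extScalars ℚ ρ g x, h₁.2.1 g x hx⟩ : ℚ ⊗[ℤ] M) =
        extScalars ℚ ρ g (e ⟨x, hx⟩ : W₂)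

/-! ### Auxiliary lemmas -/

noncomputable def iotaQ (M : Type) [AddCommGroup M] [Module ℤ M] : M →ₗ[ℤ] ℚ ⊗[ℤ] M :=
  TensorProduct.mk ℤ ℚ M 1

@[simp] lemma iotaQ_apply {M : Type} [AddCommGroup M] [Module ℤ M] (x : M) :
    iotaQ M x = (1 : ℚ) ⊗ₜ[ℤ] x := rfl

lemma iotaQ_injective {M : Type} [AddCommGroup M] [Module ℤ M] [Module.Free ℤ M] :
    Function.Injective (iotaQ M) := by
  have h1 : Function.Injective (Algebra.linearMap ℤ ℚ) := fun a b h => by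
    simpa using h
  have h2 := Module.Flat.rTensor_preserves_injective_linearMap
      (M := M) (Algebra.linearMap ℤ ℚ) h1
  have h3 : Function.Injective (TensorProduct.lid ℤ M).symm :=
    (TensorProduct.lid ℤ M).symm.injective
  have he : ⇑(iotaQ M) =
      ⇑(LinearMap.rTensor M (Algebra.linearMap ℤ ℚ)) ∘ ⇑(TensorProduct.lid ℤ M).symm := by
    funext x
    simp [TensorProduct.lid_symm_apply]
  rw [he]
  exact h2.comp h3

lemma extScalars_eq {G M : Type*} [Group G] [AddCommGroup M] [Module ℤ M]
    (ρ : Representation ℤ G M) (g : G) :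
    extScalars ℚ ρ g = LinearMap.baseChange ℚ (ρ g) := rfl

lemma extScalars_iotaQ {G : Type*} {M : Type} [Group G] [AddCommGroup M] [Module ℤ M]
    (ρ : Representation ℤ G M) (g : G) (x : M) :
    extScalars ℚ ρ g (iotaQ M x) = iotaQ M (ρ g x) := by
  rw [extScalars_eq, iotaQ_apply, iotaQ_apply, LinearMap.baseChange_tmul]

/-- Every nonzero stable submodule of a finite-dimensional representation contains
a simple subrepresentation. -/
lemma exists_isSimpleSub_aux {k G V : Type*} [Field k] [Group G] [AddCommGroup V] [Module k V]
    [FiniteDimensional k V] (σ : Representation k G V) :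
    ∀ (n : ℕ) (W : Submodule k V), Module.finrank k W = n → W ≠ ⊥ → StableSub σ W →
      ∃ W', W' ≤ W ∧ IsSimpleSub σ W' := by
  intro n
  induction n using Nat.strong_induction_on with
  | _ n ih =>
    intro W hrank hW hstable
    by_cases hs : ∀ W' ≤ W, StableSub σ W' → W' = ⊥ ∨ W' = W
    · exact ⟨W, le_rfl, hW, hstable, hs⟩
    · push_neg at hs
      obtain ⟨W', hle, hst', hne⟩ := hs
      have hne' : W' ≠ W := by
        rcases hne with ⟨h1, h2⟩; exact h2
      have hneb : W' ≠ ⊥ := hne.1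
      have hlt : Module.finrank k W' < n := by
        rw [← hrank]
        refine lt_of_le_of_ne (Submodule.finrank_mono hle) fun h => ?_
        exact hne' (Submodule.eq_of_le_of_finrank_le hle h.ge)
      obtain ⟨W'', hle'', hsimp⟩ := ih _ hlt W' rfl hneb hst'
      exact ⟨W'', hle''.trans hle, hsimp⟩

lemma exists_isSimpleSub {k G V : Type*} [Field k] [Group G] [AddCommGroup V] [Module k V]
    [FiniteDimensional k V] (σ : Representation k G V) (W : Submodule k V)
    (hW : W ≠ ⊥) (hst : StableSub σ W) : ∃ W', W' ≤ W ∧ IsSimpleSub σ W' :=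
  exists_isSimpleSub_aux σ _ W rfl hW hst

open groupCohomology in
lemma subsingleton_H2_of_no_fixed {G M : Type} [Group G] [Finite G] [AddCommGroup M]
    [Module ℤ M] [Module.Free ℤ M] [Module.Finite ℤ M] {p : ℕ} (hp : p.Prime)
    (ρ : Representation ℤ G M) (c : G) (hc : orderOf c = p)
    (h0 : ∀ x : M, ρ c x = x → x = 0) :
    Subsingleton (groupCohomology.H2 (Rep.of (ρ.comp (Subgroup.zpowers c).subtype))) := by
  haveI : Module.Flat ℤ ℚ := IsLocalization.flat ℚ (nonZeroDivisors ℤ)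
  set C := Subgroup.zpowers c with hC
  set A : Rep ℤ C := Rep.of (ρ.comp C.subtype) with hA
  -- (σ - 1) is bijective on ℚ ⊗ M
  have hinj : Function.Injective
      (extScalars ℚ ρ c - 1 : Module.End ℚ (ℚ ⊗[ℤ] M)) := by
    have he : LinearMap.baseChange ℚ (ρ c - 1)
        = (extScalars ℚ ρ c - 1 : Module.End ℚ (ℚ ⊗[ℤ] M)) := by
      have h := map_sub (Module.End.baseChangeHom ℤ ℚ M) (ρ c) 1
      rw [map_one] at h
      exact h
    rw [← he, LinearMap.baseChange_eq_ltensor]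
    exact Module.Flat.lTensor_preserves_injective_linearMap (ρ c - 1) (by
      rw [← LinearMap.ker_eq_bot, eq_bot_iff]
      intro x hx
      simp only [LinearMap.mem_ker, LinearMap.sub_apply, Module.End.one_apply,
        sub_eq_zero] at hx
      simpa using h0 x hx)
  have hsurj : Function.Surjective
      (extScalars ℚ ρ c - 1 : Module.End ℚ (ℚ ⊗[ℤ] M)) :=
    LinearMap.surjective_of_injective hinj
  -- every 2-cocycle is a coboundary
  have htop : ∀ f : cocycles₂ A, (f : C × C → A) ∈ coboundaries₂ A := by
    intro f
    refine (show (∃ y : C → M, ∀ g h : C, ρ (g : G) (y h) - y (g * h) + y g = f.1 (g, h)) → _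
      from fun ⟨y, hy⟩ => ⟨y, funext fun gh => by rw [d₁₂_hom_apply]; exact hy gh.1 gh.2⟩) ?_
    haveI : Fintype C := Fintype.ofFinite _
    have hcard : Fintype.card C = p := by
      rw [← Nat.card_eq_fintype_card, Nat.card_zpowers, hc]
    set ff : C × C → M := f.1 with hff
    have hcoc : ∀ g h j : C,
        ρ (g : G) (ff (h, j)) - ff (g * h, j) + ff (g, h * j) - ff (g, h) = 0 := by
      intro g h j
      have h' := (groupCohomology.mem_cocycles₂_def (A := A) f.1).1 f.2 g h j
      exact h'
    -- the norm 1-cochain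
    set F : C → M := fun a => ∑ x : C, ff (a, x) with hF
    have hFd : ∀ a b : C, ρ (a : G) (F b) - F (a * b) + F a = p • ff (a, b) := by
      intro a b
      have h2 : ∀ j : C, ρ (a : G) (ff (b, j)) =
          ff (a * b, j) - ff (a, b * j) + ff (a, b) := by
        intro j
        apply eq_of_sub_eq_zero
        rw [show ρ (a : G) (ff (b, j)) - (ff (a * b, j) - ff (a, b * j) + ff (a, b))
          = ρ (a : G) (ff (b, j)) - ff (a * b, j) + ff (a, b * j) - ff (a, b) from by abel]
        exact hcoc a b j
      have h1 : ρ (a : G) (F b) = ∑ j : C, ρ (a : G) (ff (b, j)) := map_sum _ _ _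
      have h3 : ∑ j : C, ff (a, b * j) = ∑ j : C, ff (a, j) :=
        Fintype.sum_equiv (Equiv.mulLeft b) _ _ (fun j => rfl)
      have h4 : ρ (a : G) (F b) = F (a * b) - F a + p • ff (a, b) := by
        rw [h1]
        simp_rw [h2]
        rw [Finset.sum_add_distrib, Finset.sum_sub_distrib, h3, Finset.sum_const,
          Finset.card_univ, hcard]
      rw [h4]; abel
    -- divide by p over ℚ
    have hp0 : (p : ℚ) ≠ 0 := Nat.cast_ne_zero.2 hp.ne_zero
    have hGqd : ∀ a b : C,
        extScalars ℚ ρ (a : G) ((p : ℚ)⁻¹ • iotaQ M (F b))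
          - (p : ℚ)⁻¹ • iotaQ M (F (a * b)) + (p : ℚ)⁻¹ • iotaQ M (F a)
          = iotaQ M (ff (a, b)) := by
      intro a b
      have h5 : iotaQ M (ρ (a : G) (F b)) - iotaQ M (F (a * b)) + iotaQ M (F a)
          = (p : ℚ) • iotaQ M (ff (a, b)) := by
        rw [← map_sub, ← map_add, hFd a b, map_nsmul, Nat.cast_smul_eq_nsmul]
      rw [map_smul, extScalars_iotaQ ρ (a : G) (F b),
        show (p : ℚ)⁻¹ • iotaQ M (ρ (a : G) (F b)) - (p:ℚ)⁻¹ • iotaQ M (F (a*b))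
            + (p:ℚ)⁻¹ • iotaQ M (F a)
          = (p : ℚ)⁻¹ • (iotaQ M (ρ (a : G) (F b)) - iotaQ M (F (a * b)) + iotaQ M (F a)) from by
          rw [smul_add, smul_sub],
        h5, inv_smul_smul₀ hp0]
    -- the generator and the correction term
    set t : C := ⟨c, Subgroup.mem_zpowers c⟩ with htdef
    have htord : orderOf t = p := by
      rw [← hc]
      exact (orderOf_injective C.subtype Subtype.coe_injective t).symm
    obtain ⟨m, hm⟩ := hsurj ((p : ℚ)⁻¹ • iotaQ M (F t))
    have hm' : extScalars ℚ ρ c m - m = (p : ℚ)⁻¹ • iotaQ M (F t) := by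
      rw [← hm]; rfl
    -- the corrected 1-cochain over ℚ
    set G' : C → ℚ ⊗[ℤ] M :=
      fun a => (p : ℚ)⁻¹ • iotaQ M (F a) - (extScalars ℚ ρ (a : G) m - m) with hG'
    have hG'd : ∀ a b : C,
        extScalars ℚ ρ (a : G) (G' b) - G' (a * b) + G' a = iotaQ M (ff (a, b)) := by
      intro a b
      have hSS : extScalars ℚ ρ (a : G) (extScalars ℚ ρ (b : G) m)
          = extScalars ℚ ρ ((a * b : C) : G) m := by
        rw [Subgroup.coe_mul, map_mul]
        rfl
      have hexp : extScalars ℚ ρ (a : G) (G' b)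
          = extScalars ℚ ρ (a : G) ((p : ℚ)⁻¹ • iotaQ M (F b))
            - (extScalars ℚ ρ ((a * b : C) : G) m - extScalars ℚ ρ (a : G) m) := by
        rw [hG']
        simp only [map_sub, hSS]
      rw [hexp, hG']
      simp only []
      rw [show extScalars ℚ ρ (a : G) ((p : ℚ)⁻¹ • iotaQ M (F b))
            - (extScalars ℚ ρ ((a * b : C) : G) m - extScalars ℚ ρ (a : G) m)
            - ((p:ℚ)⁻¹ • iotaQ M (F (a*b)) - (extScalars ℚ ρ (((a*b) : C) : G) m - m))
            + ((p:ℚ)⁻¹ • iotaQ M (F a) - (extScalars ℚ ρ (a : G) m - m))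
          = extScalars ℚ ρ (a : G) ((p : ℚ)⁻¹ • iotaQ M (F b))
            - (p : ℚ)⁻¹ • iotaQ M (F (a * b)) + (p : ℚ)⁻¹ • iotaQ M (F a) from by abel]
      exact hGqd a b
    have hG't : G' t = 0 := by
      rw [hG']
      simp only []
      rw [htdef]
      rw [show extScalars ℚ ρ ((⟨c, Subgroup.mem_zpowers c⟩ : C) : G) m
          = extScalars ℚ ρ c m from rfl]
      rw [hm']
      rw [htdef]
      abel
    -- every value of G' is integral
    have key : ∀ a : C, ∃ y : M, iotaQ M y = G' a := by
      have h1 : ∃ y : M, iotaQ M y = G' (1 : C) := by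
        refine ⟨ff (1, 1), ?_⟩
        have := hG'd 1 1
        rw [show ((1 : C) : G) = (1 : G) from rfl, map_one] at this
        simp only [one_mul, Module.End.one_apply] at this
        rw [← this]
        abel
      have hstep : ∀ a : C, (∃ y, iotaQ M y = G' a) → ∃ y, iotaQ M y = G' (a * t) := by
        rintro a ⟨y, hy⟩
        have := hG'd a t
        rw [hG't, map_zero] at this
        refine ⟨y - ff (a, t), ?_⟩
        rw [map_sub, hy]
        have : G' (a * t) = G' a - iotaQ M (ff (a, t)) := by
          rw [← this]; abel
        rw [this]
      have hpow : ∀ k : ℕ, ∃ y, iotaQ M y = G' (t ^ k) := by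
        intro k
        induction k with
        | zero => simpa using h1
        | succ n ihn => rw [pow_succ]; exact hstep _ ihn
      intro a
      obtain ⟨n, hn⟩ : ∃ n : ℤ, t ^ n = a := by
        obtain ⟨n, hn⟩ := Subgroup.mem_zpowers_iff.1 a.2
        exact ⟨n, Subtype.ext (by rw [SubgroupClass.coe_zpow]; exact hn)⟩
      have hordpos : (0 : ℤ) < (orderOf t : ℤ) := by
        rw [htord]; exact_mod_cast hp.pos
      have hr0 : 0 ≤ n % (orderOf t : ℤ) := Int.emod_nonneg n (by omega)
      have : t ^ ((n % (orderOf t : ℤ)).toNat) = a := by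
        rw [← zpow_natCast, Int.toNat_of_nonneg hr0, zpow_mod_orderOf, hn]
      rw [← this]
      exact hpow _
    choose y hy using key
    refine ⟨y, fun g h => ?_⟩
    have hinjQ : Function.Injective (iotaQ M) := iotaQ_injective
    have hlhs : iotaQ M (ρ (g : G) (y h) - y (g * h) + y g)
        = extScalars ℚ ρ (g : G) (G' h) - G' (g * h) + G' g := by
      rw [map_add, map_sub, ← extScalars_iotaQ, hy, hy, hy]
    have hfinal : ρ (g : G) (y h) - y (g * h) + y g = ff (g, h) := by
      apply hinjQ
      rw [hlhs, hG'd g h]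
    exact hfinal
  -- conclude
  refine ⟨fun a b => ?_⟩
  refine H2_induction_on (C := fun a => a = b) a (fun x =>
    H2_induction_on (C := fun b => H2π A x = b) b (fun z => ?_))
  exact (H2π_eq_iff x z).2 ((coboundaries₂ A).sub_mem (htop x) (htop z))

/-- Let `G` be a finite `p`-group acting faithfully on a homogeneous
`G`-lattice `M` such that `H²(C, M|_C) ≠ 0` for every subgroup `C` of `G` of order `p`.
Then `G` is trivial. -/
theorem stmt_10 {p : ℕ} (hp : p.Prime) {G M : Type} [Group G] [Finite G]
    (hpG : IsPGroup p G) [AddCommGroup M] [Module ℤ M]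
    [Module.Free ℤ M] [Module.Finite ℤ M] (ρ : Representation ℤ G M)
    (hfaith : Function.Injective ρ) (hhom : Homogeneous ρ)
    (hH2 : ∀ C : Subgroup G, Nat.card C = p →
      Nontrivial (groupCohomology.H2 (Rep.of (ρ.comp C.subtype)))) :
    ∀ g : G, g = 1 := by
  intro g
  by_contra hg
  haveI : Fact p.Prime := ⟨hp⟩
  haveI : Nontrivial G := ⟨⟨g, 1, hg⟩⟩
  -- a central element of order p
  haveI hcn := hpG.center_nontrivial
  have hZ : IsPGroup p (Subgroup.center G) := hpG.to_subgroup _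
  haveI : Fintype (Subgroup.center G) := Fintype.ofFinite _
  obtain ⟨n, hn⟩ := (IsPGroup.iff_card (p := p)).1 hZ
  rw [Nat.card_eq_fintype_card] at hn
  have hn0 : n ≠ 0 := by
    intro h
    rw [h, pow_zero] at hn
    exact (Fintype.one_lt_card).ne' hn
  have hdvd : p ∣ Fintype.card (Subgroup.center G) := by
    rw [hn]; exact dvd_pow_self p hn0
  obtain ⟨z, hz⟩ := exists_prime_orderOf_dvd_card p hdvd
  have hcord : orderOf (z : G) = p := by
    rw [← hz]
    exact orderOf_injective (Subgroup.center G).subtype Subtype.coe_injective z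
  set c : G := (z : G) with hcdef
  have hccen : c ∈ Subgroup.center G := z.2
  have hcne : c ≠ 1 := by
    intro h
    rw [h, orderOf_one] at hcord
    exact hp.one_lt.ne' hcord.symm
  -- a nonzero fixed vector in M
  have hcardC : Nat.card (Subgroup.zpowers c) = p := by rw [Nat.card_zpowers, hcord]
  have hfix : ∃ x : M, x ≠ 0 ∧ ρ c x = x := by
    by_contra hcon
    push_neg at hcon
    have h0 : ∀ x : M, ρ c x = x → x = 0 := by
      intro x hx
      by_contra hxne
      exact (hcon x hxne) hx
    haveI := hH2 (Subgroup.zpowers c) hcardC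
    exact (not_subsingleton _) (subsingleton_H2_of_no_fixed hp ρ c hcord h0)
  obtain ⟨x₀, hx₀ne, hx₀⟩ := hfix
  -- commuting endomorphisms
  have hcomm : ∀ g' : G, Commute (extScalars ℚ ρ c) (extScalars ℚ ρ g') := by
    intro g'
    have : c * g' = g' * c := (Subgroup.mem_center_iff.1 hccen g').symm
    show extScalars ℚ ρ c * extScalars ℚ ρ g' = extScalars ℚ ρ g' * extScalars ℚ ρ c
    rw [← map_mul, ← map_mul, this]
  have hσp : (extScalars ℚ ρ c) ^ p = 1 := by
    rw [← map_pow, ← hcord, pow_orderOf_eq_one, map_one]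
  have hNσ : (∑ i ∈ Finset.range p, (extScalars ℚ ρ c) ^ i) * (extScalars ℚ ρ c - 1) = 0 := by
    rw [geom_sum_mul, hσp, sub_self]
  -- stable subspaces
  have hE1stab : StableSub (extScalars ℚ ρ) (LinearMap.ker (extScalars ℚ ρ c - 1)) := by
    intro g' v hv
    rw [LinearMap.mem_ker] at hv ⊢
    have hcg : Commute (extScalars ℚ ρ c - 1) (extScalars ℚ ρ g') :=
      (hcomm g').sub_left (Commute.one_left _)
    calc (extScalars ℚ ρ c - 1) (extScalars ℚ ρ g' v)
        = ((extScalars ℚ ρ c - 1) * extScalars ℚ ρ g') v := rfl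
      _ = (extScalars ℚ ρ g' * (extScalars ℚ ρ c - 1)) v := by rw [hcg.eq]
      _ = extScalars ℚ ρ g' ((extScalars ℚ ρ c - 1) v) := rfl
      _ = 0 := by rw [hv, map_zero]
  have hE2stab : StableSub (extScalars ℚ ρ)
      (LinearMap.ker (∑ i ∈ Finset.range p, (extScalars ℚ ρ c) ^ i)) := by
    intro g' v hv
    rw [LinearMap.mem_ker] at hv ⊢
    have hcg : Commute (∑ i ∈ Finset.range p, (extScalars ℚ ρ c) ^ i) (extScalars ℚ ρ g') :=
      Commute.sum_left _ _ _ (fun i _ => (hcomm g').pow_left i)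
    calc (∑ i ∈ Finset.range p, (extScalars ℚ ρ c) ^ i) (extScalars ℚ ρ g' v)
        = ((∑ i ∈ Finset.range p, (extScalars ℚ ρ c) ^ i) * extScalars ℚ ρ g') v := rfl
      _ = (extScalars ℚ ρ g' * (∑ i ∈ Finset.range p, (extScalars ℚ ρ c) ^ i)) v := by
          rw [hcg.eq]
      _ = extScalars ℚ ρ g' ((∑ i ∈ Finset.range p, (extScalars ℚ ρ c) ^ i) v) := rfl
      _ = 0 := by rw [hv, map_zero]
  -- E1 is nonzero
  have hE1ne : LinearMap.ker (extScalars ℚ ρ c - 1) ≠ ⊥ := by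
    rw [Submodule.ne_bot_iff]
    refine ⟨iotaQ M x₀, LinearMap.mem_ker.2 ?_, fun h => hx₀ne ?_⟩
    · rw [LinearMap.sub_apply, Module.End.one_apply, extScalars_iotaQ, hx₀, sub_self]
    · apply iotaQ_injective
      rw [h, map_zero]
  -- the intersection of the two kernels is trivial
  have hinter : ∀ v : ℚ ⊗[ℤ] M, extScalars ℚ ρ c v = v →
      (∑ i ∈ Finset.range p, (extScalars ℚ ρ c) ^ i) v = 0 → v = 0 := by
    intro v hσv hNv
    have hpow : ∀ i : ℕ, ((extScalars ℚ ρ c) ^ i) v = v := by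
      intro i
      induction i with
      | zero => rfl
      | succ k ihk => rw [pow_succ, Module.End.mul_apply, hσv, ihk]
    have hNv' : (∑ i ∈ Finset.range p, (extScalars ℚ ρ c) ^ i) v = p • v := by
      rw [LinearMap.sum_apply]
      simp_rw [hpow]
      rw [Finset.sum_const, Finset.card_range]
    rw [hNv'] at hNv
    have h6 : (p : ℚ) • v = 0 := by rw [Nat.cast_smul_eq_nsmul]; exact hNv
    rcases smul_eq_zero.1 h6 with h | h
    · exact absurd h (Nat.cast_ne_zero.2 hp.ne_zero)
    · exact h
  by_cases hE2 : LinearMap.ker (∑ i ∈ Finset.range p, (extScalars ℚ ρ c) ^ i) = ⊥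
  · -- then c acts trivially, contradicting faithfulness
    have hσ1 : ∀ v, extScalars ℚ ρ c v = v := by
      intro v
      have h5 : (∑ i ∈ Finset.range p, (extScalars ℚ ρ c) ^ i)
          ((extScalars ℚ ρ c - 1) v) = 0 := by
        calc (∑ i ∈ Finset.range p, (extScalars ℚ ρ c) ^ i) ((extScalars ℚ ρ c - 1) v)
            = ((∑ i ∈ Finset.range p, (extScalars ℚ ρ c) ^ i) * (extScalars ℚ ρ c - 1)) v := rfl
          _ = (0 : Module.End ℚ (ℚ ⊗[ℤ] M)) v := by rw [hNσ]
          _ = 0 := rfl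
      have h7 := LinearMap.mem_ker.2 h5
      rw [hE2, Submodule.mem_bot] at h7
      have h8 : extScalars ℚ ρ c v - v = 0 := h7
      exact sub_eq_zero.1 h8
    have hrc : ρ c = ρ 1 := by
      rw [map_one]
      apply LinearMap.ext
      intro x
      apply iotaQ_injective
      rw [← extScalars_iotaQ]
      exact hσ1 (iotaQ M x)
    exact hcne (hfaith hrc)
  · -- homogeneity contradiction
    obtain ⟨W₂, hW₂le, hW₂⟩ := exists_isSimpleSub (extScalars ℚ ρ) _ hE2 hE2stab
    obtain ⟨W₁, hW₁le, hW₁⟩ := exists_isSimpleSub (extScalars ℚ ρ) _ hE1ne hE1stab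
    obtain ⟨e, he⟩ := hhom W₁ W₂ hW₁ hW₂
    obtain ⟨x, hxW, hxne⟩ := (Submodule.ne_bot_iff W₁).1 hW₁.1
    have hσx : extScalars ℚ ρ c x = x := by
      have h9 := hW₁le hxW
      rw [LinearMap.mem_ker, LinearMap.sub_apply, Module.End.one_apply, sub_eq_zero] at h9
      exact h9
    have hees := he c x hxW
    have harg : (⟨extScalars ℚ ρ c x, hW₁.2.1 c x hxW⟩ : W₁) = ⟨x, hxW⟩ := Subtype.ext hσx
    rw [harg] at hees
    have hy2 : (∑ i ∈ Finset.range p, (extScalars ℚ ρ c) ^ i)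
        ((e ⟨x, hxW⟩ : W₂) : ℚ ⊗[ℤ] M) = 0 := by
      have := hW₂le (e ⟨x, hxW⟩).2
      rwa [LinearMap.mem_ker] at this
    have hy0 := hinter _ hees.symm hy2
    have hz0 : (e ⟨x, hxW⟩ : W₂) = 0 := by
      exact_mod_cast hy0
    have hx0 : (⟨x, hxW⟩ : W₁) = 0 := e.injective (by rw [hz0, map_zero])
    exact hxne (by simpa using congrArg Subtype.val hx0)
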